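/- Let G be a connected countable graph and G' a connected subgraph. Then G' is the finite span Sfin(e') of each of its edges if and only if (1) every vertex on the boundary of G' has infinite degree and (2) any two edges of G' are joined by a path of finite weight. -/
import Mathlib


/-- The edge `e` is incident to the vertex `v`. -/
def Inc {V E : Type*} (startE endE : E → V) (v : V) (e : E) : Prop :=
  startE e = v ∨ endE e = v

/-- One step of a path of finite weight: the edges `a` and `b` share a vertex of finite
degree (no infinite star is crossed). -/
def FinStep {V E : Type*} (startE endE : E → V) (a b : E) : Prop :=
  ∃ v : V, Inc startE endE v a ∧ Inc startE endE v b ∧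
    {f : E | Inc startE endE v f}.Finite

/-- The finite span `Sfin(e)`: the set of edges joined to `e` by a path of finite weight
(including `e` itself, via the empty path). -/
def Sfin {V E : Type*} (startE endE : E → V) (e : E) : Set E :=
  {e' : E | Relation.ReflTransGen (FinStep startE endE) e e'}

/-- Let `G` be a connected countable graph and `S` (the edge set of) a connected
subgraph. Then `S` is the finite span of each of its edges if and only if (1) every vertex on
the boundary of `S` has infinite degree, and (2) any two edges of `S` are joined by a path of
finite weight. -/
theorem finite_span_characterization {V E : Type*} [Countable V] [Countable E]
    (startE endE : E → V) (S : Set E)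
    (hG : ∀ a b : E, Relation.ReflTransGen
      (fun x y : E => ∃ v : V, Inc startE endE v x ∧ Inc startE endE v y) a b)
    (hS : ∀ a ∈ S, ∀ b ∈ S, Relation.ReflTransGen
      (fun x y : E => x ∈ S ∧ y ∈ S ∧ ∃ v : V, Inc startE endE v x ∧ Inc startE endE v y) a b) :
    (∀ e' ∈ S, Sfin startE endE e' = S) ↔
      ((∀ v : V, (∃ a ∈ S, Inc startE endE v a) → (∃ b ∉ S, Inc startE endE v b) →
          {f : E | Inc startE endE v f}.Infinite) ∧
       (∀ a ∈ S, ∀ b ∈ S, b ∈ Sfin startE endE a)) := by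
  constructor
  · intro h
    constructor
    · rintro v ⟨a, ha, hva⟩ ⟨b, hb, hvb⟩ hfin
      exact hb (by
        have : b ∈ Sfin startE endE a := Relation.ReflTransGen.single ⟨v, hva, hvb, hfin⟩
        rwa [h a ha] at this)
    · intro a ha b hb
      rw [Sfin, Set.mem_setOf_eq]
      have : b ∈ Sfin startE endE a := by rw [h a ha]; exact hb
      exact this
  · rintro ⟨h1, h2⟩ e' he'
    ext x
    constructor
    · intro hx
      induction hx with
      | refl => exact he'
      | tail _ hstep ih =>
        obtain ⟨v, hva, hvb, hfin⟩ := hstep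
        by_contra hb
        exact h1 v ⟨_, ih, hva⟩ ⟨_, hb, hvb⟩ hfin
    · intro hx
      exact h2 e' he' x hx
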